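/- Let 𝔤 be a finite-dimensional real Lie algebra with an invariant inner product ⟨·,·⟩ (i.e. ⟨⁅z,x⁆,y⟩ + ⟨x,⁅z,y⁆⟩ = 0 for all x,y,z ∈ 𝔤). Let 𝔨 ⊆ 𝔤 be a Lie subalgebra and 𝔥 ⊆ 𝔨 an ideal of 𝔨; let 𝔪₀ be the orthogonal complement of 𝔥 in 𝔨 and 𝔪′ the orthogonal complement of 𝔨 in 𝔤. Assume 𝔪′ is a nonzero irreducible 𝔨-module under the adjoint action (the only subspaces W ⊆ 𝔪′ with ⁅𝔨, W⁆ ⊆ W are 0 and 𝔪′), and assume 𝔥 is not an ideal of 𝔤. Then any vector v ∈ 𝔪′ satisfying ⁅v, w⁆ = 0 for all w ∈ 𝔥 must be 0. -/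

import Mathlib

/-- **Lemma 2, second part.**
With `𝔤, B, 𝔨, 𝔥, 𝔪₀, 𝔪′` as in the orthogonal reductive decomposition, if `𝔪′` is a
nonzero irreducible `𝔨`-module under the adjoint action and `𝔥` is not an ideal of `𝔤`,
then any `v ∈ 𝔪′` with `⁅v, 𝔥⁆ = 0` must vanish. -/
theorem eq_zero_of_centralizes_h
    {L : Type*} [LieRing L] [LieAlgebra ℝ L] [FiniteDimensional ℝ L]
    (B : L →ₗ[ℝ] L →ₗ[ℝ] ℝ)
    (hBsymm : ∀ x y : L, B x y = B y x)
    (hBpos : ∀ x : L, x ≠ 0 → 0 < B x x)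
    (hBinv : ∀ x y z : L, B ⁅z, x⁆ y + B x ⁅z, y⁆ = 0)
    (𝔨 : Submodule ℝ L) (h𝔨 : ∀ x ∈ 𝔨, ∀ y ∈ 𝔨, ⁅x, y⁆ ∈ 𝔨)
    (𝔥 : Submodule ℝ L) (h𝔥𝔨 : 𝔥 ≤ 𝔨)
    (h𝔥ideal : ∀ x ∈ 𝔨, ∀ y ∈ 𝔥, ⁅x, y⁆ ∈ 𝔥)
    (𝔪₀ : Submodule ℝ L)
    (h𝔪₀ : ∀ v : L, v ∈ 𝔪₀ ↔ v ∈ 𝔨 ∧ ∀ w ∈ 𝔥, B v w = 0)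
    (𝔪' : Submodule ℝ L)
    (h𝔪' : ∀ v : L, v ∈ 𝔪' ↔ ∀ w ∈ 𝔨, B v w = 0)
    (h𝔪'ne : 𝔪' ≠ ⊥)
    (h𝔪'irr : ∀ W : Submodule ℝ L, W ≤ 𝔪' →
      (∀ x ∈ 𝔨, ∀ v ∈ W, ⁅x, v⁆ ∈ W) → W = ⊥ ∨ W = 𝔪')
    (h𝔥notideal : ¬ (∀ x : L, ∀ v ∈ 𝔥, ⁅x, v⁆ ∈ 𝔥)) :
    ∀ v ∈ 𝔪', (∀ w ∈ 𝔥, ⁅v, w⁆ = 0) → v = 0 := by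
  -- The centralizer of 𝔥 inside 𝔪'
  set W : Submodule ℝ L :=
    { carrier := { v | v ∈ 𝔪' ∧ ∀ w ∈ 𝔥, ⁅v, w⁆ = 0 }
      zero_mem' := ⟨𝔪'.zero_mem, fun w _ => zero_lie w⟩
      add_mem' := fun {x y} hx hy =>
        ⟨𝔪'.add_mem hx.1 hy.1, fun w hw => by
          rw [add_lie, hx.2 w hw, hy.2 w hw, add_zero]⟩
      smul_mem' := fun c x hx =>
        ⟨𝔪'.smul_mem c hx.1, fun w hw => by
          rw [smul_lie, hx.2 w hw, smul_zero]⟩ } with hWdef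
  have hWle : W ≤ 𝔪' := fun v hv => hv.1
  have hWinv : ∀ x ∈ 𝔨, ∀ v ∈ W, ⁅x, v⁆ ∈ W := by
    intro x hx v hv
    refine ⟨?_, ?_⟩
    · rw [h𝔪']
      intro w hw
      have := hBinv v w x
      have hxw : ⁅x, w⁆ ∈ 𝔨 := h𝔨 x hx w hw
      have : B ⁅x, v⁆ w = - B v ⁅x, w⁆ := by linarith [hBinv v w x]
      rw [this, (h𝔪' v).1 hv.1 _ hxw, neg_zero]
    · intro w hw
      have hjac : ⁅⁅x, v⁆, w⁆ = ⁅x, ⁅v, w⁆⁆ - ⁅v, ⁅x, w⁆⁆ := by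
        rw [lie_lie]
      rw [hjac, hv.2 w hw, lie_zero, hv.2 _ (h𝔥ideal x hx w hw), sub_zero]
  rcases h𝔪'irr W hWle hWinv with hbot | htop
  · intro v hv hcen
    have : v ∈ W := ⟨hv, hcen⟩
    rw [hbot] at this
    exact this
  · -- Then 𝔥 would be an ideal of L, contradiction.
    exfalso
    apply h𝔥notideal
    -- orthogonal decomposition L = 𝔨 ⊕ 𝔪'
    have hrefl : B.IsRefl := fun x y h => by rw [hBsymm]; exact h
    have hnd : (LinearMap.BilinForm.restrict B 𝔨).Nondegenerate := by
      refine ⟨?_, ?_⟩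
      all_goals
        intro ⟨x, hx⟩ h
        by_contra hne
        have hx0 : x ≠ 0 := by simpa using hne
        have := h ⟨x, hx⟩
        simp only [LinearMap.BilinForm.restrict_apply] at this
        exact (hBpos x hx0).ne' this
    have hcompl := LinearMap.BilinForm.isCompl_orthogonal_of_restrict_nondegenerate
      (B := B) (W := 𝔨) hrefl hnd
    have horth : LinearMap.BilinForm.orthogonal B 𝔨 = 𝔪' := by
      ext v
      rw [LinearMap.BilinForm.mem_orthogonal_iff, h𝔪']
      constructor
      · intro h w hw
        rw [hBsymm]; exact h w hw
      · intro h n hn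
        show B n v = 0
        rw [hBsymm]; exact h n hn
    intro x v hv
    have hxsup : x ∈ 𝔨 ⊔ 𝔪' := by
      rw [← horth, hcompl.sup_eq_top]; trivial
    rcases Submodule.mem_sup.1 hxsup with ⟨k, hk, m, hm, rfl⟩
    have hm' : m ∈ W := htop ▸ hm
    have : ⁅k + m, v⁆ = ⁅k, v⁆ + ⁅m, v⁆ := add_lie k m v
    rw [this, hm'.2 v hv, add_zero]
    exact h𝔥ideal k hk v hv
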